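/- Pythagorean identity for the oblique projection error (equation (5.4) in the paper). Let B ∈ ℝ^{m1×m2}, Ω ∈ ℝ^{m2×s}, with SVD setup for B and k ≤ min(m1, m2). Assume rank(Ω_top) = k and set M = Ω_top† V_topᵀ ∈ ℝ^{s×m2}. Then ‖B (I − Ω M)‖_F² = ‖Σ_bot‖_F² + ‖Σ_bot Ω_bot Ω_top†‖_F². -/

import Mathlib

open Matrix

/-- Frobenius norm of a real matrix. -/
noncomputable def frob {m n : ℕ} (A : Matrix (Fin m) (Fin n) ℝ) : ℝ :=
  Real.sqrt (∑ i, ∑ j, (A i j) ^ 2)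

/-- Moore–Penrose pseudoinverse of a full row rank matrix: `W† = Wᵀ (W Wᵀ)⁻¹`. -/
noncomputable def pinvR {k s : ℕ} (W : Matrix (Fin k) (Fin s) ℝ) :
    Matrix (Fin s) (Fin k) ℝ :=
  Wᵀ * (W * Wᵀ)⁻¹

/-- Embedding of the "bottom" indices `{k, …, m-1}` (as `Fin (m - k)`) into `Fin m`. -/
def botIdx {m k : ℕ} (hk : k ≤ m) (j : Fin (m - k)) : Fin m :=
  ⟨k + j.1, by have := j.isLt; omega⟩

namespace Stmt4Aux

noncomputable def frobSq {m n : ℕ} (A : Matrix (Fin m) (Fin n) ℝ) : ℝ :=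
  ∑ i, ∑ j, (A i j) ^ 2

lemma frob_sq {m n : ℕ} (A : Matrix (Fin m) (Fin n) ℝ) : frob A ^ 2 = frobSq A :=
  Real.sq_sqrt (by positivity)

lemma frobSq_eq_trace {m n : ℕ} (A : Matrix (Fin m) (Fin n) ℝ) :
    frobSq A = (A * Aᵀ).trace := by
  simp [frobSq, Matrix.trace, Matrix.mul_apply, pow_two, Matrix.diag]

lemma frobSq_mul_orth_left {m n p : ℕ} (U : Matrix (Fin m) (Fin p) ℝ)
    (A : Matrix (Fin p) (Fin n) ℝ) (hU : Uᵀ * U = 1) :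
    frobSq (U * A) = frobSq A := by
  rw [frobSq_eq_trace, frobSq_eq_trace, Matrix.transpose_mul]
  simp only [Matrix.mul_assoc]
  rw [Matrix.trace_mul_comm]
  simp only [Matrix.mul_assoc]
  rw [hU, Matrix.mul_one]

/-- Selection matrix for an index map. -/
def sel {p m : ℕ} (f : Fin p → Fin m) : Matrix (Fin p) (Fin m) ℝ :=
  (1 : Matrix (Fin m) (Fin m) ℝ).submatrix f id

lemma mul_selT {n p m : ℕ} (A : Matrix (Fin n) (Fin m) ℝ) (f : Fin p → Fin m) :
    A * (sel f)ᵀ = A.submatrix id f := by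
  ext i j
  simp [Matrix.mul_apply, sel, Matrix.one_apply, mul_ite]

lemma sel_mul {n p m : ℕ} (f : Fin p → Fin m) (A : Matrix (Fin m) (Fin n) ℝ) :
    sel f * A = A.submatrix f id := by
  ext i j
  simp [Matrix.mul_apply, sel, Matrix.one_apply, ite_mul]

lemma sel_mul_selT_self {p m : ℕ} (f : Fin p → Fin m) (hf : Function.Injective f) :
    sel f * (sel f)ᵀ = 1 := by
  rw [mul_selT, sel]
  ext i j
  simp [Matrix.one_apply, hf.eq_iff]

def splitEquiv {k m : ℕ} (hk : k ≤ m) : Fin k ⊕ Fin (m - k) ≃ Fin m where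
  toFun := Sum.elim (Fin.castLE hk) (botIdx hk)
  invFun x := if h : x.1 < k then .inl ⟨x.1, h⟩ else .inr ⟨x.1 - k, by omega⟩
  left_inv x := by
    cases x with
    | inl a => simp [botIdx, Fin.castLE, a.isLt]
    | inr a =>
      have := a.isLt
      simp only [Sum.elim_inr, botIdx]
      refine (dif_neg (show ¬ (k + (a : ℕ) < k) by omega)).trans ?_
      simp
  right_inv x := by
    by_cases h : x.1 < k
    · simp [h, Fin.castLE]
    · simp only [dif_neg h]
      simp only [Sum.elim_inr, botIdx]
      ext
      simp
      omega

lemma selT_mul_sel_add {k m : ℕ} (hk : k ≤ m) :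
    (sel (Fin.castLE hk))ᵀ * sel (Fin.castLE hk)
      + (sel (botIdx hk))ᵀ * sel (botIdx hk) = (1 : Matrix (Fin m) (Fin m) ℝ) := by
  ext i j
  simp only [Matrix.add_apply, Matrix.mul_apply, Matrix.transpose_apply, sel,
    Matrix.submatrix_apply, id_eq]
  have key : (∑ x : Fin k, (1 : Matrix (Fin m) (Fin m) ℝ) (Fin.castLE hk x) i
        * (1 : Matrix (Fin m) (Fin m) ℝ) (Fin.castLE hk x) j)
      + ∑ x : Fin (m - k), (1 : Matrix (Fin m) (Fin m) ℝ) (botIdx hk x) i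
        * (1 : Matrix (Fin m) (Fin m) ℝ) (botIdx hk x) j
      = ∑ y : Fin m, (1 : Matrix (Fin m) (Fin m) ℝ) y i
        * (1 : Matrix (Fin m) (Fin m) ℝ) y j := by
    rw [← Equiv.sum_comp (splitEquiv hk)
      (fun y => (1 : Matrix (Fin m) (Fin m) ℝ) y i * (1 : Matrix (Fin m) (Fin m) ℝ) y j),
      Fintype.sum_sum_type]
    rfl
  have key2 : ∑ y : Fin m, (1 : Matrix (Fin m) (Fin m) ℝ) y i
      * (1 : Matrix (Fin m) (Fin m) ℝ) y j = (1 : Matrix (Fin m) (Fin m) ℝ) i j := by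
    by_cases h : i = j
    · subst h
      simp [Matrix.one_apply, ite_mul]
    · rw [Matrix.one_apply_ne h]
      apply Finset.sum_eq_zero
      intro y _
      by_cases hy : y = i
      · subst hy
        rw [Matrix.one_apply_ne h, mul_zero]
      · rw [Matrix.one_apply_ne hy, zero_mul]
  exact key.trans key2

lemma botIdx_injective {k m : ℕ} (hk : k ≤ m) : Function.Injective (botIdx hk) := by
  intro a b h
  have := congrArg Fin.val h
  simp only [botIdx] at this
  exact Fin.ext (by omega)

lemma submatrix_orth {m p q : ℕ} (V : Matrix (Fin m) (Fin m) ℝ) (hV : Vᵀ * V = 1)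
    (f : Fin p → Fin m) (g : Fin q → Fin m) :
    (V.submatrix id f)ᵀ * (V.submatrix id g)
      = (1 : Matrix (Fin m) (Fin m) ℝ).submatrix f g := by
  ext i j
  have h := congrFun (congrFun hV (f i)) (g j)
  simp only [Matrix.mul_apply, Matrix.transpose_apply] at h
  simpa [Matrix.mul_apply] using h

lemma one_sub_ff {k m : ℕ} (hk : k ≤ m) :
    (1 : Matrix (Fin m) (Fin m) ℝ).submatrix (Fin.castLE hk) (Fin.castLE hk) = 1 := by
  ext i j
  simp [Matrix.one_apply, Fin.castLE, Fin.ext_iff]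

lemma one_sub_bb {k m : ℕ} (hk : k ≤ m) :
    (1 : Matrix (Fin m) (Fin m) ℝ).submatrix (botIdx hk) (botIdx hk) = 1 := by
  ext i j
  simp [Matrix.one_apply, (botIdx_injective hk).eq_iff]

lemma one_sub_bf {k m : ℕ} (hk : k ≤ m) :
    (1 : Matrix (Fin m) (Fin m) ℝ).submatrix (botIdx hk) (Fin.castLE hk) = 0 := by
  ext i j
  have hj := j.isLt
  simp only [Matrix.submatrix_apply, Matrix.zero_apply]
  rw [Matrix.one_apply_ne]
  intro h
  have := congrArg Fin.val h
  simp only [botIdx, Fin.coe_castLE] at this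
  omega

/-- Pythagoras for Frobenius norm with orthogonal row blocks. -/
lemma pythago {r p q n : ℕ} (A : Matrix (Fin r) (Fin p) ℝ) (C : Matrix (Fin r) (Fin q) ℝ)
    (P : Matrix (Fin p) (Fin n) ℝ) (Q : Matrix (Fin q) (Fin n) ℝ)
    (hP : P * Pᵀ = 1) (hQ : Q * Qᵀ = 1) (hPQ : P * Qᵀ = 0) :
    frobSq (A * P - C * Q) = frobSq A + frobSq C := by
  have hQP : Q * Pᵀ = 0 := by
    have := congrArg Matrix.transpose hPQ
    rwa [Matrix.transpose_mul, Matrix.transpose_transpose, Matrix.transpose_zero] at this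
  have e1 : A * P * (A * P)ᵀ = A * Aᵀ := by
    rw [Matrix.transpose_mul, Matrix.mul_assoc, ← Matrix.mul_assoc P, hP, Matrix.one_mul]
  have e2 : A * P * (C * Q)ᵀ = 0 := by
    rw [Matrix.transpose_mul, Matrix.mul_assoc, ← Matrix.mul_assoc P, hPQ,
      Matrix.zero_mul, Matrix.mul_zero]
  have e3 : C * Q * (A * P)ᵀ = 0 := by
    rw [Matrix.transpose_mul, Matrix.mul_assoc, ← Matrix.mul_assoc Q, hQP,
      Matrix.zero_mul, Matrix.mul_zero]
  have e4 : C * Q * (C * Q)ᵀ = C * Cᵀ := by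
    rw [Matrix.transpose_mul, Matrix.mul_assoc, ← Matrix.mul_assoc Q, hQ, Matrix.one_mul]
  have key : (A * P - C * Q) * (A * P - C * Q)ᵀ = A * Aᵀ + C * Cᵀ := by
    rw [Matrix.transpose_sub, Matrix.mul_sub, Matrix.sub_mul, Matrix.sub_mul, e1, e2, e3, e4]
    abel
  rw [frobSq_eq_trace, key, Matrix.trace_add, ← frobSq_eq_trace, ← frobSq_eq_trace]

/-- The bottom-row selection of `Sg`. -/
lemma Sg_mul_selT {m1 m2 k : ℕ} (hk1 : k ≤ m1) (hk2 : k ≤ m2)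
    (Sg : Matrix (Fin m1) (Fin m2) ℝ)
    (hSg : ∀ (i : Fin m1) (j : Fin m2), (i : ℕ) ≠ (j : ℕ) → Sg i j = 0) :
    Sg * (sel (botIdx hk2))ᵀ
      = (sel (botIdx hk1))ᵀ * Sg.submatrix (botIdx hk1) (botIdx hk2) := by
  rw [mul_selT]
  ext i j
  simp only [Matrix.submatrix_apply, id_eq, Matrix.mul_apply, Matrix.transpose_apply, sel]
  by_cases h : k ≤ (i : ℕ)
  · rw [Finset.sum_eq_single (⟨(i : ℕ) - k, by have := i.isLt; omega⟩ : Fin (m1 - k))]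
    · have hb : botIdx hk1 ⟨(i : ℕ) - k, by have := i.isLt; omega⟩ = i :=
        Fin.ext (by show k + ((i : ℕ) - k) = (i : ℕ); omega)
      rw [hb]
      simp [Matrix.one_apply]
    · intro b _ hb
      rw [Matrix.one_apply_ne, zero_mul]
      intro hc
      apply hb
      have h5 : k + (b : ℕ) = (i : ℕ) := congrArg Fin.val hc
      exact Fin.ext (by show (b : ℕ) = (i : ℕ) - k; omega)
    · intro hmem
      exact absurd (Finset.mem_univ _) hmem
  · rw [hSg i (botIdx hk2 j) (by show (i : ℕ) ≠ k + (j : ℕ); omega)]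
    symm
    apply Finset.sum_eq_zero
    intro l _
    rw [Matrix.one_apply_ne, zero_mul]
    intro hc
    have h5 : k + (l : ℕ) = (i : ℕ) := congrArg Fin.val hc
    omega

/-- Key factorization of the residual. -/
lemma factor {m1 m2 s k : ℕ} (hk1 : k ≤ m1) (hk2 : k ≤ m2)
    (Sg : Matrix (Fin m1) (Fin m2) ℝ) (V : Matrix (Fin m2) (Fin m2) ℝ)
    (Ω : Matrix (Fin m2) (Fin s) ℝ) (W : Matrix (Fin s) (Fin k) ℝ)
    (hSg : ∀ (i : Fin m1) (j : Fin m2), (i : ℕ) ≠ (j : ℕ) → Sg i j = 0)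
    (hWone : ((V.submatrix id (Fin.castLE hk2))ᵀ * Ω) * W = 1) :
    Sg * (Vᵀ * (1 - Ω * (W * (V.submatrix id (Fin.castLE hk2))ᵀ)))
      = (sel (botIdx hk1))ᵀ *
        (Sg.submatrix (botIdx hk1) (botIdx hk2) *
          ((V.submatrix id (botIdx hk2))ᵀ
            - ((V.submatrix id (botIdx hk2))ᵀ * Ω)
                * (W * (V.submatrix id (Fin.castLE hk2))ᵀ))) := by
  have hf2X : sel (Fin.castLE hk2)
      * (Vᵀ * (1 - Ω * (W * (V.submatrix id (Fin.castLE hk2))ᵀ))) = 0 := by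
    rw [← Matrix.mul_assoc, sel_mul, ← Matrix.transpose_submatrix,
      Matrix.mul_sub, Matrix.mul_one]
    have h2 : (V.submatrix id (Fin.castLE hk2))ᵀ
        * (Ω * (W * (V.submatrix id (Fin.castLE hk2))ᵀ))
        = (V.submatrix id (Fin.castLE hk2))ᵀ := by
      have h3 := congrArg (fun M => M * (V.submatrix id (Fin.castLE hk2))ᵀ) hWone
      simp only [Matrix.mul_assoc, Matrix.one_mul] at h3
      exact h3
    rw [h2, sub_self]
  have hb2X : sel (botIdx hk2)
      * (Vᵀ * (1 - Ω * (W * (V.submatrix id (Fin.castLE hk2))ᵀ)))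
      = (V.submatrix id (botIdx hk2))ᵀ
          - ((V.submatrix id (botIdx hk2))ᵀ * Ω)
              * (W * (V.submatrix id (Fin.castLE hk2))ᵀ) := by
    rw [← Matrix.mul_assoc, sel_mul, ← Matrix.transpose_submatrix,
      Matrix.mul_sub, Matrix.mul_one]
    simp only [Matrix.mul_assoc]
  calc Sg * (Vᵀ * (1 - Ω * (W * (V.submatrix id (Fin.castLE hk2))ᵀ)))
      = Sg * (((sel (Fin.castLE hk2))ᵀ * sel (Fin.castLE hk2)
          + (sel (botIdx hk2))ᵀ * sel (botIdx hk2))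
            * (Vᵀ * (1 - Ω * (W * (V.submatrix id (Fin.castLE hk2))ᵀ)))) := by
        rw [selT_mul_sel_add hk2, Matrix.one_mul]
    _ = Sg * ((sel (Fin.castLE hk2))ᵀ
          * (sel (Fin.castLE hk2)
              * (Vᵀ * (1 - Ω * (W * (V.submatrix id (Fin.castLE hk2))ᵀ)))))
        + Sg * ((sel (botIdx hk2))ᵀ
          * (sel (botIdx hk2)
              * (Vᵀ * (1 - Ω * (W * (V.submatrix id (Fin.castLE hk2))ᵀ))))) := by
        rw [Matrix.add_mul, Matrix.mul_add, Matrix.mul_assoc, Matrix.mul_assoc]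
    _ = (Sg * (sel (botIdx hk2))ᵀ)
          * ((V.submatrix id (botIdx hk2))ᵀ
            - ((V.submatrix id (botIdx hk2))ᵀ * Ω)
                * (W * (V.submatrix id (Fin.castLE hk2))ᵀ)) := by
        rw [hf2X, hb2X, Matrix.mul_zero, Matrix.mul_zero, zero_add, ← Matrix.mul_assoc]
    _ = _ := by
        rw [Sg_mul_selT hk1 hk2 Sg hSg, Matrix.mul_assoc]

end Stmt4Aux

open Stmt4Aux in
theorem stmt4 {m1 m2 s k : ℕ} (hk1 : k ≤ m1) (hk2 : k ≤ m2)
    (B : Matrix (Fin m1) (Fin m2) ℝ) (Ω : Matrix (Fin m2) (Fin s) ℝ)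
    (U : Matrix (Fin m1) (Fin m1) ℝ) (V : Matrix (Fin m2) (Fin m2) ℝ)
    (Sg : Matrix (Fin m1) (Fin m2) ℝ)
    (hU : Uᵀ * U = 1) (hU' : U * Uᵀ = 1)
    (hV : Vᵀ * V = 1) (hV' : V * Vᵀ = 1)
    (hSg : ∀ (i : Fin m1) (j : Fin m2), (i : ℕ) ≠ (j : ℕ) → Sg i j = 0)
    (hSVD : B = U * Sg * Vᵀ)
    (hrank : ((V.submatrix id (Fin.castLE hk2))ᵀ * Ω).rank = k) :
    (frob (B * (1 - Ω * (pinvR ((V.submatrix id (Fin.castLE hk2))ᵀ * Ω)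
        * (V.submatrix id (Fin.castLE hk2))ᵀ)))) ^ 2
      = (frob (Sg.submatrix (botIdx hk1) (botIdx hk2))) ^ 2
        + (frob (Sg.submatrix (botIdx hk1) (botIdx hk2)
            * ((V.submatrix id (botIdx hk2))ᵀ * Ω)
            * pinvR ((V.submatrix id (Fin.castLE hk2))ᵀ * Ω))) ^ 2 := by
  classical
  -- full row rank gives a right inverse
  have hWone : ((V.submatrix id (Fin.castLE hk2))ᵀ * Ω)
      * pinvR ((V.submatrix id (Fin.castLE hk2))ᵀ * Ω) = 1 := by
    set Ωt := (V.submatrix id (Fin.castLE hk2))ᵀ * Ω with hΩt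
    have hrk : (Ωt * Ωtᵀ).rank = k := by
      rw [Matrix.rank_self_mul_transpose]; exact hrank
    have hUnit : IsUnit (Ωt * Ωtᵀ) := by
      rw [← Matrix.mulVec_surjective_iff_isUnit]
      have htop : LinearMap.range (Ωt * Ωtᵀ).mulVecLin = ⊤ := by
        apply Submodule.eq_top_of_finrank_eq
        have hfin : Module.finrank ℝ (LinearMap.range (Ωt * Ωtᵀ).mulVecLin) = k := hrk
        rw [hfin, Module.finrank_pi, Fintype.card_fin]
      intro v
      have hv : v ∈ LinearMap.range (Ωt * Ωtᵀ).mulVecLin := by rw [htop]; trivial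
      obtain ⟨w, hw⟩ := hv
      exact ⟨w, hw⟩
    rw [pinvR, ← Matrix.mul_assoc]
    exact Matrix.mul_nonsing_inv _ ((Matrix.isUnit_iff_isUnit_det _).mp hUnit)
  rw [frob_sq, frob_sq, frob_sq, hSVD]
  have h1 : U * Sg * Vᵀ * (1 - Ω * (pinvR ((V.submatrix id (Fin.castLE hk2))ᵀ * Ω)
        * (V.submatrix id (Fin.castLE hk2))ᵀ))
      = U * (Sg * (Vᵀ * (1 - Ω * (pinvR ((V.submatrix id (Fin.castLE hk2))ᵀ * Ω)
        * (V.submatrix id (Fin.castLE hk2))ᵀ)))) := by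
    simp only [Matrix.mul_assoc]
  rw [h1, factor hk1 hk2 Sg V Ω _ hSg hWone, frobSq_mul_orth_left U _ hU,
    frobSq_mul_orth_left _ _ (by
      rw [Matrix.transpose_transpose]
      exact sel_mul_selT_self _ (botIdx_injective hk1))]
  have h2 : Sg.submatrix (botIdx hk1) (botIdx hk2)
      * ((V.submatrix id (botIdx hk2))ᵀ
          - ((V.submatrix id (botIdx hk2))ᵀ * Ω)
              * (pinvR ((V.submatrix id (Fin.castLE hk2))ᵀ * Ω)
                * (V.submatrix id (Fin.castLE hk2))ᵀ))
      = Sg.submatrix (botIdx hk1) (botIdx hk2) * (V.submatrix id (botIdx hk2))ᵀ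
        - (Sg.submatrix (botIdx hk1) (botIdx hk2)
            * ((V.submatrix id (botIdx hk2))ᵀ * Ω)
            * pinvR ((V.submatrix id (Fin.castLE hk2))ᵀ * Ω))
          * (V.submatrix id (Fin.castLE hk2))ᵀ := by
    simp only [Matrix.mul_sub, Matrix.mul_assoc]
  rw [h2]
  rw [pythago _ _ _ _
    (by rw [Matrix.transpose_transpose, submatrix_orth V hV, one_sub_bb])
    (by rw [Matrix.transpose_transpose, submatrix_orth V hV, one_sub_ff])
    (by rw [Matrix.transpose_transpose, submatrix_orth V hV, one_sub_bf])]
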